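/- Let P be a finite set of n ≥ 1 points on the real line and S* a finite set of closed bounded intervals of ℝ such that no endpoint of an interval of S* coincides with a point of P. If S* is a discriminating code for P, then every one of the n+1 gaps determined by P contains an endpoint of some interval of S*. -/
import Mathlib


/-- A closed bounded interval of `ℝ` is represented by its pair of endpoints;
a point `p` belongs to the interval `I` if `I.1 ≤ p ∧ p ≤ I.2`. -/
def memI (p : ℝ) (I : ℝ × ℝ) : Prop := I.1 ≤ p ∧ p ≤ I.2

/-- The code of a point `p` with respect to a finite set `S` of intervals:
the set of intervals of `S` containing `p`. -/
def code (S : Finset (ℝ × ℝ)) (p : ℝ) : Set (ℝ × ℝ) := {I | I ∈ S ∧ memI p I}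

/-- `S` is a discriminating code for `P`: every point of `P` has a nonempty code and
distinct points of `P` have distinct codes. -/
def Discr (S : Finset (ℝ × ℝ)) (P : Finset ℝ) : Prop :=
  (∀ p ∈ P, (code S p).Nonempty) ∧
    ∀ p ∈ P, ∀ q ∈ P, p ≠ q → code S p ≠ code S q

/-- `G` is one of the `n+1` gaps determined by the point set `P`:
either `(-∞, min P)`, or `(max P, ∞)`, or the open interval between two
consecutive points of `P`. -/
def IsGap (P : Finset ℝ) (G : Set ℝ) : Prop :=
  (∃ h : P.Nonempty, G = Set.Iio (P.min' h)) ∨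
  (∃ h : P.Nonempty, G = Set.Ioi (P.max' h)) ∨
  (∃ p ∈ P, ∃ q ∈ P, p < q ∧ (∀ r ∈ P, ¬ (p < r ∧ r < q)) ∧ G = Set.Ioo p q)

/-- Every gap determined by `P` contains an endpoint of some interval of `S`. -/
def GapsStabbed (P : Finset ℝ) (S : Finset (ℝ × ℝ)) : Prop :=
  ∀ G : Set ℝ, IsGap P G → ∃ I ∈ S, I.1 ∈ G ∨ I.2 ∈ G

theorem stmt1 (P : Finset ℝ) (hP : P.Nonempty) (S : Finset (ℝ × ℝ))
    (hIv : ∀ I ∈ S, I.1 ≤ I.2)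
    (hEnd : ∀ I ∈ S, ∀ p ∈ P, I.1 ≠ p ∧ I.2 ≠ p)
    (hDisc : Discr S P) :
    GapsStabbed P S := by
  intro G hG
  rcases hG with ⟨h, rfl⟩ | ⟨h, rfl⟩ | ⟨p, hp, q, hq, hpq, _, rfl⟩
  · obtain ⟨I, hIS, hI1, _⟩ := hDisc.1 _ (P.min'_mem h)
    exact ⟨I, hIS, Or.inl (lt_of_le_of_ne hI1 ((hEnd I hIS _ (P.min'_mem h)).1))⟩
  · obtain ⟨I, hIS, _, hI2⟩ := hDisc.1 _ (P.max'_mem h)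
    exact ⟨I, hIS, Or.inr
      (lt_of_le_of_ne hI2 (Ne.symm ((hEnd I hIS _ (P.max'_mem h)).2)))⟩
  · have hne := hDisc.2 p hp q hq (ne_of_lt hpq)
    have hw : ∃ I, (I ∈ code S p ∧ I ∉ code S q) ∨ (I ∈ code S q ∧ I ∉ code S p) := by
      by_contra h'
      push_neg at h'
      exact hne (Set.ext fun I => ⟨(h' I).1, (h' I).2⟩)
    obtain ⟨I, ⟨⟨hIS, h1, h2⟩, hnq⟩ | ⟨⟨hIS, h1, h2⟩, hnp⟩⟩ := hw
    · have hI1q : I.1 ≤ q := le_trans h1 hpq.le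
      have h2q : ¬ q ≤ I.2 := fun hle => hnq ⟨hIS, hI1q, hle⟩
      exact ⟨I, hIS, Or.inr ⟨lt_of_le_of_ne h2 (Ne.symm ((hEnd I hIS p hp).2)),
        lt_of_not_ge h2q⟩⟩
    · have hp2 : p ≤ I.2 := le_trans hpq.le h2
      have h1p : ¬ I.1 ≤ p := fun hle => hnp ⟨hIS, hle, hp2⟩
      exact ⟨I, hIS, Or.inl ⟨lt_of_not_ge h1p,
        lt_of_le_of_ne h1 ((hEnd I hIS q hq).1)⟩⟩
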